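/- Let T ∈ (0,1], M ∈ (−1,1) with T = 1 − M². Define h(λ) = 4√T·φ(Mλ/√T) + 2Mλ·erf(Mλ/√(2T)) + 2λM², where φ is the standard Gaussian density. Then the infimum of h over λ ∈ ℝ is at most 4√T·φ(√2·erf⁻¹(M)), attained at λ = −√(2T)·erf⁻¹(M)/M (when M ≠ 0). -/

import Mathlib

/-- The Gauss error function `erf x = (2/√π) ∫₀ˣ e^{-t²} dt`. -/
noncomputable def erf (x : ℝ) : ℝ :=
  (2 / Real.sqrt Real.pi) * ∫ t in (0 : ℝ)..x, Real.exp (-t ^ 2)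

/-- The standard Gaussian density. -/
noncomputable def gaussPhi (z : ℝ) : ℝ := (1 / Real.sqrt (2 * Real.pi)) * Real.exp (-z ^ 2 / 2)

lemma erf_neg (x : ℝ) : erf (-x) = - erf x := by
  unfold erf
  rw [← mul_neg]
  congr 1
  have := intervalIntegral.integral_comp_neg (a := (0:ℝ)) (b := x) (fun t => Real.exp (-t ^ 2))
  simp only [neg_neg, neg_sq, neg_zero] at this ⊢
  rw [this, intervalIntegral.integral_symm]

lemma erf_pos_of_pos {y : ℝ} (hy : 0 < y) : 0 < erf y := by
  unfold erf
  apply mul_pos (by positivity)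
  apply intervalIntegral.intervalIntegral_pos_of_pos_on
  · exact (Real.continuous_exp.comp (by continuity)).intervalIntegrable 0 y
  · intro x _; positivity
  · exact hy

theorem stmt_12 (T M : ℝ) (hT : T ∈ Set.Ioc (0 : ℝ) 1) (hM : M ∈ Set.Ioo (-1 : ℝ) 1)
    (hTM : T = 1 - M ^ 2) (y : ℝ) (hy : erf y = M)
    (h : ℝ → ℝ)
    (hh : ∀ lam, h lam = 4 * Real.sqrt T * gaussPhi (M * lam / Real.sqrt T) +
      2 * M * lam * erf (M * lam / Real.sqrt (2 * T)) + 2 * lam * M ^ 2) :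
    (⨅ lam : ℝ, h lam) ≤ 4 * Real.sqrt T * gaussPhi (Real.sqrt 2 * y) ∧
      (M ≠ 0 → h (-(Real.sqrt (2 * T)) * y / M) = 4 * Real.sqrt T * gaussPhi (Real.sqrt 2 * y)) := by
  obtain ⟨hT0, hT1⟩ := hT
  have hsT : 0 < Real.sqrt T := Real.sqrt_pos.mpr hT0
  have hs2T : Real.sqrt (2 * T) = Real.sqrt 2 * Real.sqrt T := Real.sqrt_mul (by norm_num) T
  have hs2T0 : (0:ℝ) < Real.sqrt (2 * T) := Real.sqrt_pos.mpr (by linarith)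
  have key : M ≠ 0 → h (-(Real.sqrt (2 * T)) * y / M) = 4 * Real.sqrt T * gaussPhi (Real.sqrt 2 * y) := by
    intro hMne
    rw [hh]
    have e1 : M * (-(Real.sqrt (2 * T)) * y / M) / Real.sqrt T = -(Real.sqrt 2 * y) := by
      rw [hs2T]; field_simp
    have e2 : M * (-(Real.sqrt (2 * T)) * y / M) / Real.sqrt (2 * T) = -y := by
      rw [hs2T]; field_simp
    rw [e1, e2, erf_neg, hy]
    have e3 : gaussPhi (-(Real.sqrt 2 * y)) = gaussPhi (Real.sqrt 2 * y) := by
      unfold gaussPhi; rw [neg_sq]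
    rw [e3]; ring
  refine ⟨?_, key⟩
  by_cases hbdd : BddBelow (Set.range h)
  · by_cases hM0 : M = 0
    · have hy0 : y = 0 := by
        rcases lt_trichotomy y 0 with hlt | heq | hgt
        · have : 0 < erf (-y) := erf_pos_of_pos (by linarith)
          rw [erf_neg, hy, hM0] at this; linarith
        · exact heq
        · have := erf_pos_of_pos hgt; rw [hy, hM0] at this; linarith
      calc (⨅ lam : ℝ, h lam) ≤ h 0 := ciInf_le hbdd 0
        _ = 4 * Real.sqrt T * gaussPhi (Real.sqrt 2 * y) := by
            rw [hh, hM0, hy0]; simp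
    · calc (⨅ lam : ℝ, h lam) ≤ h (-(Real.sqrt (2 * T)) * y / M) := ciInf_le hbdd _
        _ = _ := key hM0
  · rw [Real.iInf_of_not_bddBelow hbdd]
    have : 0 ≤ gaussPhi (Real.sqrt 2 * y) := by unfold gaussPhi; positivity
    positivity
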